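/- There is an injective group homomorphism φ: ℚ/ℤ → T into Thompson's group T such that rot(φ(x)) = x for every x ∈ ℚ/ℤ, where rot is the rotation number. -/

import Mathlib

open Function Set

notation "S¹" => AddCircle (1:ℝ)

/-- The group structure on self-homeomorphisms, with `(f * g) x = f (g x)`. -/
instance homeoGroup (X : Type*) [TopologicalSpace X] : Group (X ≃ₜ X) where
  mul f g := g.trans f
  one := Homeomorph.refl X
  inv := Homeomorph.symm
  mul_assoc a b c := Homeomorph.ext fun _ => rfl
  one_mul a := Homeomorph.ext fun _ => rfl
  mul_one a := Homeomorph.ext fun _ => rfl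
  inv_mul_cancel a := Homeomorph.ext fun x => a.symm_apply_apply x

/-- `F` is a lift of the circle homeomorphism `f` through the projection `ℝ → ℝ/ℤ`. -/
def IsLift (f : S¹ ≃ₜ S¹) (F : CircleDeg1Lift) : Prop :=
  ∀ x : ℝ, f (x : S¹) = ((F x : ℝ) : S¹)

/-- A circle homeomorphism is orientation-preserving iff it admits a monotone degree-one
lift to the real line. -/
def OrientationPreserving (f : S¹ ≃ₜ S¹) : Prop := ∃ F : CircleDeg1Lift, IsLift f F

open Classical in
/-- Poincaré's rotation number of a circle homeomorphism, as an element of `ℝ/ℤ`;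
the translation number of any lift, reduced mod 1. -/
noncomputable def rot (f : S¹ ≃ₜ S¹) : S¹ :=
  if h : OrientationPreserving f then ((h.choose.translationNumber : ℝ) : S¹) else 0

/-- The fixed-point set of a circle homeomorphism. -/
def FixSet (f : S¹ ≃ₜ S¹) : Set S¹ := {s | f s = s}

/-- A subgroup has a non-abelian free subgroup iff the free group of rank 2 embeds into it. -/
def HasFreeSubgroup {Γ : Type*} [Group Γ] (G : Subgroup Γ) : Prop :=
  ∃ φ : FreeGroup (Fin 2) →* Γ, Function.Injective φ ∧ ∀ w, φ w ∈ G

/-- A real number is dyadic rational. -/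
def IsDyadic (x : ℝ) : Prop := ∃ (a : ℤ) (n : ℕ), x = (a : ℝ) / 2 ^ n

/-- Membership in Thompson's group `T`: the circle homeomorphism has a lift which maps dyadic
rationals to dyadic rationals and, away from finitely many breakpoints (mod 1, all dyadic),
is locally affine with slope an integer power of `2`. -/
def InThompsonT (f : S¹ ≃ₜ S¹) : Prop :=
  ∃ F : CircleDeg1Lift, IsLift f F ∧ (∀ x : ℝ, IsDyadic x → IsDyadic (F x)) ∧
    ∃ B : Finset ℝ, (∀ b ∈ B, IsDyadic b) ∧
      ∀ x : ℝ, (∀ b ∈ B, ∀ n : ℤ, x ≠ b + n) →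
        ∃ ε > 0, ∃ (k : ℤ) (c : ℝ), ∀ y : ℝ, |y - x| < ε → F y = 2 ^ k * y + c

/-- The subgroup `ℚ/ℤ` of `ℝ/ℤ`. -/
noncomputable def QmodZ : AddSubgroup S¹ where
  carrier := {x | ∃ q : ℚ, x = ((q : ℝ) : S¹)}
  zero_mem' := ⟨0, by norm_num⟩
  add_mem' := by
    rintro a b ⟨p, rfl⟩ ⟨q, rfl⟩
    exact ⟨p + q, by push_cast; rfl⟩
  neg_mem' := by
    rintro a ⟨q, rfl⟩
    exact ⟨-q, by push_cast; rfl⟩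


namespace TGrp

/-- A positive real that is an integer power of 2. -/
def IsPow2 (x : ℝ) : Prop := ∃ k : ℤ, x = 2 ^ k

def IsDyadic (x : ℝ) : Prop := ∃ (a : ℤ) (n : ℕ), x = (a : ℝ) / 2 ^ n

lemma IsPow2.pos {x : ℝ} (h : IsPow2 x) : 0 < x := by
  obtain ⟨k, rfl⟩ := h; positivity

lemma IsPow2.mul {x y : ℝ} (hx : IsPow2 x) (hy : IsPow2 y) : IsPow2 (x * y) := by
  obtain ⟨k, rfl⟩ := hx; obtain ⟨l, rfl⟩ := hy
  exact ⟨k + l, (zpow_add₀ (by norm_num) _ _).symm⟩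

lemma IsPow2.div {x y : ℝ} (hx : IsPow2 x) (hy : IsPow2 y) : IsPow2 (x / y) := by
  obtain ⟨k, rfl⟩ := hx; obtain ⟨l, rfl⟩ := hy
  exact ⟨k - l, (zpow_sub₀ (by norm_num) _ _).symm⟩

lemma isPow2_zpow (k : ℤ) : IsPow2 ((2:ℝ) ^ k) := ⟨k, rfl⟩

lemma IsDyadic.add {x y : ℝ} (hx : IsDyadic x) (hy : IsDyadic y) : IsDyadic (x + y) := by
  obtain ⟨a, n, rfl⟩ := hx; obtain ⟨b, m, rfl⟩ := hy
  refine ⟨a * 2 ^ m + b * 2 ^ n, n + m, ?_⟩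
  rw [pow_add]
  push_cast
  field_simp

lemma IsDyadic.neg {x : ℝ} (hx : IsDyadic x) : IsDyadic (-x) := by
  obtain ⟨a, n, rfl⟩ := hx; exact ⟨-a, n, by push_cast; ring⟩

lemma IsDyadic.sub {x y : ℝ} (hx : IsDyadic x) (hy : IsDyadic y) : IsDyadic (x - y) :=
  (sub_eq_add_neg x y) ▸ hx.add hy.neg

lemma isDyadic_int (a : ℤ) : IsDyadic (a : ℝ) := ⟨a, 0, by norm_num⟩

lemma IsPow2.dyadic {x : ℝ} (h : IsPow2 x) : IsDyadic x := by
  obtain ⟨k, rfl⟩ := h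
  rcases le_or_gt 0 k with hk | hk
  · refine ⟨2 ^ k.toNat, 0, ?_⟩
    norm_num
    rw [← zpow_natCast (2:ℝ) k.toNat, Int.toNat_of_nonneg hk]
  · refine ⟨1, (-k).toNat, ?_⟩
    rw [← zpow_natCast, Int.toNat_of_nonneg (by omega)]
    rw [eq_div_iff (by positivity), ← zpow_add₀ (by norm_num : (2:ℝ) ≠ 0)]
    norm_num

lemma IsPow2.mul_dyadic {x y : ℝ} (hx : IsPow2 x) (hy : IsDyadic y) : IsDyadic (x * y) := by
  obtain ⟨k, rfl⟩ := hx; obtain ⟨a, n, rfl⟩ := hy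
  rcases le_or_gt 0 k with hk | hk
  · refine ⟨2 ^ k.toNat * a, n, ?_⟩
    push_cast
    rw [← zpow_natCast (2:ℝ) k.toNat]
    rw [Int.toNat_of_nonneg hk]
    ring
  · refine ⟨a, n + (-k).toNat, ?_⟩
    have h2 : (2:ℝ) ^ ((-k).toNat) = (2:ℝ) ^ (-k) := by
      rw [← zpow_natCast (2:ℝ) (-k).toNat, Int.toNat_of_nonneg (by omega)]
    rw [pow_add, h2, div_mul_eq_div_div, zpow_neg, div_eq_mul_inv (_ / _), inv_inv]
    ring

/-- relative lengths of the subdivision of a level-`(m-1)` cylinder into `m` pieces -/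
noncomputable def rho (m d : ℕ) : ℝ :=
  if d + 2 ≤ m then (2:ℝ) ^ (-(d+1) : ℤ) else (2:ℝ) ^ (1 - (m:ℤ))

lemma rho_isPow2 (m d : ℕ) : IsPow2 (rho m d) := by
  unfold rho; split <;> exact ⟨_, rfl⟩

lemma rho_pos (m d : ℕ) : 0 < rho m d := (rho_isPow2 m d).pos

lemma rho_sum (m : ℕ) (hm : 1 ≤ m) : ∑ d ∈ Finset.range m, rho m d = 1 := by
  obtain ⟨k, rfl⟩ : ∃ k, m = k + 1 := ⟨m - 1, by omega⟩
  clear hm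
  induction k with
  | zero => simp [rho]
  | succ k ih =>
    have h1 : ∀ d < k, rho (k + 2) d = rho (k + 1) d := by
      intro d hd
      unfold rho
      rw [if_pos (by omega), if_pos (by omega)]
    have hsplit : ∑ d ∈ Finset.range (k + 2), rho (k + 2) d
        = (∑ d ∈ Finset.range k, rho (k + 2) d) + rho (k+2) k + rho (k+2) (k+1) := by
      rw [Finset.sum_range_succ, Finset.sum_range_succ]
    have hk1 : rho (k+2) k = (2:ℝ) ^ (-(k+1) : ℤ) := by unfold rho; rw [if_pos (by omega)]
    have hk2 : rho (k+2) (k+1) = (2:ℝ) ^ (-(k+1) : ℤ) := by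
      unfold rho
      rw [if_neg (by omega)]
      congr 1
    have hprev : ∑ d ∈ Finset.range (k+1), rho (k+1) d
        = (∑ d ∈ Finset.range k, rho (k+1) d) + rho (k+1) k := Finset.sum_range_succ _ _
    have hlast : rho (k+1) k = (2:ℝ) ^ (-(k:ℤ)) := by
      unfold rho
      rw [if_neg (by omega)]
      congr 1
      omega
    have hsum_eq : ∑ d ∈ Finset.range k, rho (k + 2) d = ∑ d ∈ Finset.range k, rho (k+1) d :=
      Finset.sum_congr rfl fun d hd => h1 d (Finset.mem_range.1 hd)
    rw [hsplit, hk1, hk2, hsum_eq]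
    have : (∑ d ∈ Finset.range k, rho (k+1) d) = 1 - (2:ℝ)^(-(k:ℤ)) := by
      have := ih
      rw [hprev, hlast] at this
      linarith
    rw [this]
    have : (2:ℝ) ^ (-(k+1) : ℤ) + (2:ℝ) ^ (-(k+1) : ℤ) = (2:ℝ)^(-(k:ℤ)) := by
      rw [← two_mul, show (-(k:ℤ)) = 1 + (-(k+1)) by ring, zpow_add₀ (by norm_num : (2:ℝ) ≠ 0)]
      norm_num
    linarith

/-! ### Cylinder lengths at level `n` (there are `n!` cylinders) -/

noncomputable def len : ℕ → ℕ → ℝ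
  | 0, _ => 1
  | (n+1), j => len n (j / (n+1)) * rho (n+1) (j % (n+1))

lemma len_isPow2 (n j : ℕ) : IsPow2 (len n j) := by
  induction n generalizing j with
  | zero => exact ⟨0, by simp [len]⟩
  | succ n ih => exact (ih _).mul (rho_isPow2 _ _)

lemma len_pos (n j : ℕ) : 0 < len n j := (len_isPow2 n j).pos

lemma sum_range_mul (f : ℕ → ℝ) (A B : ℕ) :
    ∑ j ∈ Finset.range (A * B), f j
      = ∑ i ∈ Finset.range A, ∑ d ∈ Finset.range B, f (B * i + d) := by
  induction A with
  | zero => simp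
  | succ A ih =>
    rw [show (A+1) * B = A * B + B from by ring, Finset.sum_range_add, ih,
      Finset.sum_range_succ]
    congr 1
    exact Finset.sum_congr rfl fun d _ => by rw [mul_comm B A]

lemma len_step (n i d : ℕ) (hd : d < n + 1) :
    len (n+1) ((n+1) * i + d) = len n i * rho (n+1) d := by
  show len n (((n+1) * i + d) / (n+1)) * rho (n+1) (((n+1) * i + d) % (n+1)) = _
  rw [Nat.mul_add_div (by omega), Nat.mul_add_mod, Nat.div_eq_of_lt hd,
    Nat.mod_eq_of_lt hd, add_zero]

lemma len_sum (n : ℕ) : ∑ j ∈ Finset.range n.factorial, len n j = 1 := by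
  induction n with
  | zero => simp [len, Nat.factorial]
  | succ n ih =>
    have hfac : (n+1).factorial = n.factorial * (n+1) := by
      rw [Nat.factorial_succ]; ring
    rw [hfac, sum_range_mul]
    have : ∀ i ∈ Finset.range n.factorial,
        ∑ d ∈ Finset.range (n+1), len (n+1) ((n+1) * i + d) = len n i := by
      intro i _
      have : ∀ d ∈ Finset.range (n+1), len (n+1) ((n+1) * i + d) = len n i * rho (n+1) d :=
        fun d hd => len_step n i d (Finset.mem_range.1 hd)
      rw [Finset.sum_congr rfl this, ← Finset.mul_sum, rho_sum (n+1) (by omega), mul_one]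
    rw [Finset.sum_congr rfl this, ih]

/-! ### Partition points over `ℤ` -/

noncomputable def lenZ (n : ℕ) (i : ℤ) : ℝ := len n (i % (n.factorial : ℤ)).toNat

noncomputable def betaZ (n : ℕ) (i : ℤ) : ℝ :=
  ((i / (n.factorial : ℤ) : ℤ) : ℝ) + ∑ j ∈ Finset.range (i % (n.factorial : ℤ)).toNat, len n j

lemma Npos (n : ℕ) : (0:ℤ) < (n.factorial : ℤ) := by
  exact_mod_cast n.factorial_pos

lemma lenZ_pos (n : ℕ) (i : ℤ) : 0 < lenZ n i := len_pos _ _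

lemma lenZ_isPow2 (n : ℕ) (i : ℤ) : IsPow2 (lenZ n i) := len_isPow2 _ _

lemma betaZ_zero (n : ℕ) : betaZ n 0 = 0 := by
  simp [betaZ]

lemma betaZ_succ (n : ℕ) (i : ℤ) : betaZ n (i + 1) = betaZ n i + lenZ n i := by
  have hNpos := Npos n
  have hNne : (n.factorial : ℤ) ≠ 0 := by omega
  have hdm : (n.factorial : ℤ) * (i / (n.factorial : ℤ)) + i % (n.factorial : ℤ) = i :=
    Int.mul_ediv_add_emod i _
  have hr0 : 0 ≤ i % (n.factorial : ℤ) := Int.emod_nonneg i hNne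
  have hrN : i % (n.factorial : ℤ) < (n.factorial : ℤ) := Int.emod_lt_of_pos i hNpos
  rcases lt_or_eq_of_le (by omega : i % (n.factorial : ℤ) + 1 ≤ (n.factorial : ℤ)) with hlt | heq
  · have key : i + 1 = (i % (n.factorial : ℤ) + 1)
        + (n.factorial : ℤ) * (i / (n.factorial : ℤ)) := by linarith
    have h1 : (i + 1) % (n.factorial : ℤ) = i % (n.factorial : ℤ) + 1 := by
      rw [key, Int.add_mul_emod_self_left, Int.emod_eq_of_lt (by omega) hlt]
    have h2 : (i + 1) / (n.factorial : ℤ) = i / (n.factorial : ℤ) := by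
      rw [key, Int.add_mul_ediv_left _ _ hNne, Int.ediv_eq_zero_of_lt (by omega) hlt, zero_add]
    have h3 : ((i + 1) % (n.factorial : ℤ)).toNat = (i % (n.factorial : ℤ)).toNat + 1 := by
      omega
    rw [betaZ, betaZ, lenZ, h3, h2, Finset.sum_range_succ]
    ring
  · have key : i + 1 = 0 + (n.factorial : ℤ) * (i / (n.factorial : ℤ) + 1) := by
      rw [mul_add, mul_one]; linarith
    have h1 : (i + 1) % (n.factorial : ℤ) = 0 := by
      rw [key, Int.add_mul_emod_self_left]; simp
    have h2 : (i + 1) / (n.factorial : ℤ) = i / (n.factorial : ℤ) + 1 := by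
      rw [key, Int.add_mul_ediv_left _ _ hNne]; simp
    have hNnat : (i % (n.factorial : ℤ)).toNat + 1 = n.factorial := by omega
    have hsum : (∑ j ∈ Finset.range ((i % (n.factorial : ℤ)).toNat), len n j)
        + len n (i % (n.factorial : ℤ)).toNat = 1 := by
      rw [← Finset.sum_range_succ, hNnat, len_sum]
    rw [betaZ, betaZ, lenZ, h1, h2]
    simp only [Int.toNat_zero, Finset.range_zero, Finset.sum_empty, add_zero]
    push_cast
    linarith

lemma betaZ_shift (n : ℕ) (i k : ℤ) :
    betaZ n (i + (n.factorial : ℤ) * k) = betaZ n i + k := by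
  have hNne : (n.factorial : ℤ) ≠ 0 := by have := Npos n; omega
  have h1 : (i + (n.factorial:ℤ) * k) % (n.factorial:ℤ) = i % (n.factorial:ℤ) := by
    rw [Int.add_mul_emod_self_left]
  have h2 : (i + (n.factorial:ℤ) * k) / (n.factorial:ℤ) = i / (n.factorial:ℤ) + k :=
    Int.add_mul_ediv_left _ k hNne
  rw [betaZ, betaZ, h1, h2]
  push_cast
  ring

lemma lenZ_shift (n : ℕ) (i k : ℤ) : lenZ n (i + (n.factorial : ℤ) * k) = lenZ n i := by
  rw [lenZ, lenZ, Int.add_mul_emod_self_left]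

lemma betaZ_strictMono (n : ℕ) : StrictMono (betaZ n) :=
  strictMono_int_of_lt_succ fun i => by
    rw [betaZ_succ]; linarith [lenZ_pos n i]

lemma sum_len_dyadic (n m : ℕ) : IsDyadic (∑ j ∈ Finset.range m, len n j) := by
  induction m with
  | zero => simpa using isDyadic_int 0
  | succ m ih => rw [Finset.sum_range_succ]; exact ih.add (len_isPow2 n m).dyadic

lemma betaZ_dyadic (n : ℕ) (i : ℤ) : IsDyadic (betaZ n i) :=
  (isDyadic_int _).add (sum_len_dyadic _ _)

/-! ### Locating a point in the partition -/

lemma betaZ_mul_int (n : ℕ) (k : ℤ) : betaZ n ((n.factorial : ℤ) * k) = k := by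
  have := betaZ_shift n 0 k
  rw [zero_add, betaZ_zero, zero_add] at this
  exact this

open Classical in
noncomputable def idx (n : ℕ) (x : ℝ) : ℤ :=
  ⌊x⌋ * (n.factorial : ℤ) +
    (Nat.findGreatest (fun j => betaZ n (⌊x⌋ * (n.factorial : ℤ) + j) ≤ x) n.factorial : ℤ)

lemma idx_spec (n : ℕ) (x : ℝ) :
    betaZ n (idx n x) ≤ x ∧ x < betaZ n (idx n x + 1) := by
  classical
  set b : ℤ := ⌊x⌋ * (n.factorial : ℤ) with hb
  set P : ℕ → Prop := fun j => betaZ n (b + j) ≤ x with hP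
  have hP0 : P 0 := by
    simp only [hP, Nat.cast_zero, add_zero, hb, mul_comm (⌊x⌋) ((n.factorial : ℤ)),
      betaZ_mul_int]
    exact Int.floor_le x
  set j : ℕ := Nat.findGreatest P n.factorial with hj
  have hjle : j ≤ n.factorial := Nat.findGreatest_le _
  have hPj : P j := by
    rcases Nat.eq_zero_or_pos j with h0 | h0
    · rw [h0]; exact hP0
    · exact Nat.findGreatest_of_ne_zero hj.symm (by omega)
  have hjlt : j < n.factorial := by
    rcases lt_or_eq_of_le hjle with h | h
    · exact h
    · exfalso
      have : betaZ n (b + (n.factorial : ℤ)) ≤ x := by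
        have := hPj
        rw [hP] at this
        simpa [h] using this
      rw [hb, show ⌊x⌋ * (n.factorial:ℤ) + (n.factorial:ℤ) = (n.factorial:ℤ) * (⌊x⌋ + 1) from by
        ring, betaZ_mul_int] at this
      push_cast at this
      linarith [Int.lt_floor_add_one x]
  have hnot : ¬ P (j + 1) := Nat.findGreatest_is_greatest (n := n.factorial) (by omega) (by omega)
  constructor
  · show betaZ n (b + (j:ℤ)) ≤ x
    exact hPj
  · show x < betaZ n (b + (j:ℤ) + 1)
    rw [hP] at hnot
    push_cast at hnot
    rw [show b + ((j:ℤ) + 1) = b + (j:ℤ) + 1 from by ring] at hnot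
    linarith [lt_of_not_ge hnot]

lemma idx_unique (n : ℕ) (x : ℝ) (i : ℤ) (h1 : betaZ n i ≤ x) (h2 : x < betaZ n (i + 1)) :
    idx n x = i := by
  have hs := idx_spec n x
  by_contra hne
  rcases lt_or_gt_of_ne hne with h | h
  · have : betaZ n (idx n x + 1) ≤ betaZ n i := (betaZ_strictMono n).monotone (by omega)
    linarith
  · have : betaZ n (i + 1) ≤ betaZ n (idx n x) := (betaZ_strictMono n).monotone (by omega)
    linarith

lemma idx_betaZ (n : ℕ) (i : ℤ) : idx n (betaZ n i) = i :=
  idx_unique n _ i le_rfl (betaZ_strictMono n (by omega))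

lemma idx_mono (n : ℕ) {x y : ℝ} (h : x ≤ y) : idx n x ≤ idx n y := by
  have hx := idx_spec n x
  have hy := idx_spec n y
  by_contra hc
  have : betaZ n (idx n y + 1) ≤ betaZ n (idx n x) := (betaZ_strictMono n).monotone (by omega)
  linarith

lemma idx_shift (n : ℕ) (x : ℝ) (k : ℤ) : idx n (x + k) = idx n x + (n.factorial : ℤ) * k := by
  have hs := idx_spec n x
  apply idx_unique
  · rw [show idx n x + (n.factorial:ℤ) * k = idx n x + (n.factorial:ℤ) * k from rfl,
      betaZ_shift]
    linarith [hs.1]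
  · rw [show idx n x + (n.factorial:ℤ) * k + 1 = (idx n x + 1) + (n.factorial:ℤ) * k from by ring,
      betaZ_shift]
    linarith [hs.2]

/-! ### The piecewise affine lifts -/

noncomputable def Fraw (n : ℕ) (a : ℤ) (x : ℝ) : ℝ :=
  betaZ n (idx n x + a) + lenZ n (idx n x + a) / lenZ n (idx n x) * (x - betaZ n (idx n x))

lemma Fraw_zero (n : ℕ) (x : ℝ) : Fraw n 0 x = x := by
  rw [Fraw, add_zero, div_self (ne_of_gt (lenZ_pos n _)), one_mul]
  ring

lemma Fraw_mem (n : ℕ) (a : ℤ) (x : ℝ) :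
    betaZ n (idx n x + a) ≤ Fraw n a x ∧ Fraw n a x < betaZ n (idx n x + a + 1) := by
  have hs := idx_spec n x
  have hlp := lenZ_pos n (idx n x)
  have hlp' := lenZ_pos n (idx n x + a)
  have hxlt : x - betaZ n (idx n x) < lenZ n (idx n x) := by
    have := hs.2
    rw [betaZ_succ] at this
    linarith
  constructor
  · have : 0 ≤ lenZ n (idx n x + a) / lenZ n (idx n x) * (x - betaZ n (idx n x)) := by
      apply mul_nonneg (le_of_lt (div_pos hlp' hlp))
      linarith [hs.1]
    rw [Fraw]; linarith
  · rw [Fraw, betaZ_succ]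
    have : lenZ n (idx n x + a) / lenZ n (idx n x) * (x - betaZ n (idx n x))
        < lenZ n (idx n x + a) := by
      have h2 : lenZ n (idx n x + a) / lenZ n (idx n x) * (x - betaZ n (idx n x))
          < lenZ n (idx n x + a) / lenZ n (idx n x) * lenZ n (idx n x) :=
        mul_lt_mul_of_pos_left hxlt (div_pos hlp' hlp)
      rwa [div_mul_cancel₀ _ (ne_of_gt hlp)] at h2
    linarith

lemma idx_Fraw (n : ℕ) (a : ℤ) (x : ℝ) : idx n (Fraw n a x) = idx n x + a :=
  idx_unique n _ _ (Fraw_mem n a x).1 (Fraw_mem n a x).2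

lemma Fraw_comp (n : ℕ) (a b : ℤ) (x : ℝ) : Fraw n a (Fraw n b x) = Fraw n (a + b) x := by
  have h1 : Fraw n b x - betaZ n (idx n x + b)
      = lenZ n (idx n x + b) / lenZ n (idx n x) * (x - betaZ n (idx n x)) := by
    rw [Fraw]; ring
  rw [Fraw, idx_Fraw, h1, Fraw, show idx n x + b + a = idx n x + (a + b) from by ring]
  have hb := ne_of_gt (lenZ_pos n (idx n x + b))
  have hi := ne_of_gt (lenZ_pos n (idx n x))
  field_simp

lemma Fraw_add_one (n : ℕ) (a : ℤ) (x : ℝ) : Fraw n a (x + 1) = Fraw n a x + 1 := by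
  have h1 : idx n (x + 1) = idx n x + (n.factorial : ℤ) * 1 := by
    have := idx_shift n x 1
    push_cast at this
    exact this
  rw [Fraw, Fraw, h1]
  rw [show idx n x + (n.factorial:ℤ) * 1 + a = (idx n x + a) + (n.factorial:ℤ) * 1 from by ring,
    betaZ_shift, lenZ_shift, betaZ_shift, lenZ_shift]
  push_cast
  ring

lemma Fraw_period (n : ℕ) (a k : ℤ) (x : ℝ) :
    Fraw n (a + (n.factorial : ℤ) * k) x = Fraw n a x + k := by
  rw [Fraw, Fraw,
    show idx n x + (a + (n.factorial:ℤ) * k) = (idx n x + a) + (n.factorial:ℤ) * k from by ring,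
    betaZ_shift, lenZ_shift]
  ring

lemma Fraw_int_translate (n : ℕ) (k : ℤ) (x : ℝ) : Fraw n ((n.factorial : ℤ) * k) x = x + k := by
  have := Fraw_period n 0 k x
  rw [zero_add, Fraw_zero] at this
  rw [this]

lemma Fraw_strictMono (n : ℕ) (a : ℤ) : StrictMono (Fraw n a) := by
  intro x y hxy
  rcases eq_or_lt_of_le (idx_mono n (le_of_lt hxy)) with heq | hlt
  · rw [Fraw, Fraw, ← heq]
    have : 0 < lenZ n (idx n x + a) / lenZ n (idx n x) :=
      div_pos (lenZ_pos _ _) (lenZ_pos _ _)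
    nlinarith
  · calc Fraw n a x < betaZ n (idx n x + a + 1) := (Fraw_mem n a x).2
    _ ≤ betaZ n (idx n y + a) := (betaZ_strictMono n).monotone (by omega)
    _ ≤ Fraw n a y := (Fraw_mem n a y).1

lemma Fraw_surjective (n : ℕ) (a : ℤ) : Function.Surjective (Fraw n a) := fun y =>
  ⟨Fraw n (-a) y, by rw [Fraw_comp, add_neg_cancel, Fraw_zero]⟩

lemma Fraw_continuous (n : ℕ) (a : ℤ) : Continuous (Fraw n a) :=
  (Fraw_strictMono n a).monotone.continuous_of_surjective (Fraw_surjective n a)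

lemma Fraw_dyadic (n : ℕ) (a : ℤ) {x : ℝ} (hx : IsDyadic x) : IsDyadic (Fraw n a x) :=
  (betaZ_dyadic _ _).add
    (((lenZ_isPow2 _ _).div (lenZ_isPow2 _ _)).mul_dyadic (hx.sub (betaZ_dyadic _ _)))

/-! ### Coherence between level `n` and level `n+1` -/

lemma factS (n : ℕ) : ((n+1).factorial : ℤ) = (n+1) * (n.factorial : ℤ) := by
  rw [Nat.factorial_succ]
  push_cast
  ring

lemma level_decomp (n : ℕ) (i : ℤ) (d : ℕ) (hd : d < n + 1) :
    ((n+1) * i + d) % ((n+1).factorial : ℤ) = (n+1) * (i % (n.factorial:ℤ)) + d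
      ∧ ((n+1) * i + d) / ((n+1).factorial : ℤ) = i / (n.factorial:ℤ) := by
  have hN := Npos n
  have hM := Npos (n+1)
  have hr0 : 0 ≤ i % (n.factorial:ℤ) := Int.emod_nonneg i (by omega)
  have hrN : i % (n.factorial:ℤ) < (n.factorial:ℤ) := Int.emod_lt_of_pos i hN
  have key : (n+1) * i + (d:ℤ)
      = ((n+1) * (i % (n.factorial:ℤ)) + d) + (i / (n.factorial:ℤ)) * ((n+1).factorial : ℤ) := by
    rw [factS]
    have hdm : (n.factorial : ℤ) * (i / (n.factorial : ℤ)) + i % (n.factorial : ℤ) = i :=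
      Int.mul_ediv_add_emod i _
    nlinarith [hdm]
  have hb0 : 0 ≤ (n+1) * (i % (n.factorial:ℤ)) + (d:ℤ) := by positivity
  have hbM : (n+1) * (i % (n.factorial:ℤ)) + (d:ℤ) < ((n+1).factorial : ℤ) := by
    rw [factS]
    nlinarith
  constructor
  · rw [key, Int.add_mul_emod_self_right, Int.emod_eq_of_lt hb0 hbM]
  · rw [key, Int.add_mul_ediv_right _ _ (by omega : ((n+1).factorial : ℤ) ≠ 0),
      Int.ediv_eq_zero_of_lt hb0 hbM, zero_add]

lemma lenZ_level (n : ℕ) (i : ℤ) (d : ℕ) (hd : d < n+1) :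
    lenZ (n+1) ((n+1) * i + d) = lenZ n i * rho (n+1) d := by
  have hN := Npos n
  have hr0 : 0 ≤ i % (n.factorial:ℤ) := Int.emod_nonneg i (by omega)
  rw [lenZ, (level_decomp n i d hd).1]
  have htn : (((n+1) * (i % (n.factorial:ℤ)) + d).toNat = (n+1) * (i % (n.factorial:ℤ)).toNat + d) := by
    have : ((n+1:ℤ)) * (i % (n.factorial:ℤ)) = ((n+1) * (i % (n.factorial:ℤ)).toNat : ℕ) := by
      push_cast
      rw [Int.toNat_of_nonneg hr0]
    omega
  rw [htn, len_step n _ d hd]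
  rfl

lemma sum_len_mul (n r : ℕ) : ∑ j ∈ Finset.range (r * (n+1)), len (n+1) j
    = ∑ j ∈ Finset.range r, len n j := by
  rw [sum_range_mul]
  apply Finset.sum_congr rfl
  intro i _
  have : ∀ d ∈ Finset.range (n+1), len (n+1) ((n+1) * i + d) = len n i * rho (n+1) d :=
    fun d hd => len_step n i d (Finset.mem_range.1 hd)
  rw [Finset.sum_congr rfl this, ← Finset.mul_sum, rho_sum (n+1) (by omega), mul_one]

lemma betaZ_level (n : ℕ) (i : ℤ) (d : ℕ) (hd : d < n+1) :
    betaZ (n+1) ((n+1) * i + d)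
      = betaZ n i + (∑ d' ∈ Finset.range d, rho (n+1) d') * lenZ n i := by
  have hN := Npos n
  have hr0 : 0 ≤ i % (n.factorial:ℤ) := Int.emod_nonneg i (by omega)
  rw [betaZ, (level_decomp n i d hd).1, (level_decomp n i d hd).2]
  have htn : (((n+1) * (i % (n.factorial:ℤ)) + d).toNat
      = (i % (n.factorial:ℤ)).toNat * (n+1) + d) := by
    have h2 : ((n+1:ℤ)) * (i % (n.factorial:ℤ))
        = (((i % (n.factorial:ℤ)).toNat * (n+1) : ℕ) : ℤ) := by
      push_cast
      rw [Int.toNat_of_nonneg hr0]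
      ring
    omega
  rw [htn, Finset.sum_range_add, sum_len_mul]
  have hinner : ∀ d' ∈ Finset.range d,
      len (n+1) ((i % (n.factorial:ℤ)).toNat * (n+1) + d')
        = len n (i % (n.factorial:ℤ)).toNat * rho (n+1) d' := by
    intro d' hd'
    rw [mul_comm ((i % (n.factorial:ℤ)).toNat) (n+1)]
    exact len_step n _ d' (by have := Finset.mem_range.1 hd'; omega)
  rw [Finset.sum_congr rfl hinner, ← Finset.mul_sum]
  rw [betaZ, lenZ]
  ring

lemma betaZ_level0 (n : ℕ) (k : ℤ) : betaZ (n+1) ((n+1) * k) = betaZ n k := by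
  have := betaZ_level n k 0 (by omega)
  simpa using this

lemma idx_level (n : ℕ) (x : ℝ) :
    (n+1 : ℤ) * idx n x ≤ idx (n+1) x ∧ idx (n+1) x < (n+1) * (idx n x + 1) := by
  have hs := idx_spec n x
  have hs' := idx_spec (n+1) x
  constructor
  · by_contra h
    push_neg at h
    have : betaZ (n+1) (idx (n+1) x + 1) ≤ betaZ (n+1) ((n+1) * idx n x) :=
      (betaZ_strictMono (n+1)).monotone (by omega)
    rw [betaZ_level0] at this
    linarith [hs.1, hs'.2]
  · by_contra h
    push_neg at h
    have : betaZ (n+1) ((n+1) * (idx n x + 1)) ≤ betaZ (n+1) (idx (n+1) x) :=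
      (betaZ_strictMono (n+1)).monotone h
    rw [betaZ_level0] at this
    linarith [hs.2, hs'.1]

lemma Fraw_lift (n : ℕ) (a : ℤ) (x : ℝ) : Fraw (n+1) ((n+1) * a) x = Fraw n a x := by
  obtain ⟨h1, h2⟩ := idx_level n x
  have h2' : idx (n+1) x < (n+1) * idx n x + (n+1) := by
    have : ((n:ℤ)+1) * (idx n x + 1) = (n+1) * idx n x + (n+1) := by ring
    omega
  set d : ℕ := (idx (n+1) x - (n+1) * idx n x).toNat with hd
  have hid : idx (n+1) x = (n+1) * idx n x + d := by omega
  have hdlt : d < n + 1 := by omega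
  have e1 : idx (n+1) x + (n+1) * a = (n+1) * (idx n x + a) + d := by
    rw [hid]; ring
  rw [Fraw, Fraw, e1, hid, betaZ_level n (idx n x + a) d hdlt, lenZ_level n (idx n x + a) d hdlt,
    betaZ_level n (idx n x) d hdlt, lenZ_level n (idx n x) d hdlt]
  have hρ := ne_of_gt (rho_pos (n+1) d)
  have hl := ne_of_gt (lenZ_pos n (idx n x))
  field_simp
  ring

lemma Fraw_lift_le (n m : ℕ) (h : n ≤ m) (a : ℤ) (x : ℝ) :
    Fraw m (((m.factorial / n.factorial : ℕ) : ℤ) * a) x = Fraw n a x := by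
  induction m with
  | zero =>
    have : n = 0 := by omega
    subst this
    simp [Fraw]
  | succ m ih =>
    rcases Nat.lt_or_ge n (m+1) with hlt | hge
    · have hnm : n ≤ m := by omega
      have hdvd : n.factorial ∣ m.factorial := Nat.factorial_dvd_factorial hnm
      have hfac : ((m+1).factorial / n.factorial) = (m+1) * (m.factorial / n.factorial) := by
        rw [Nat.factorial_succ, Nat.mul_div_assoc _ hdvd]
      rw [hfac]
      have : (((m+1) * (m.factorial / n.factorial) : ℕ) : ℤ) * a
          = ((m:ℤ)+1) * (((m.factorial / n.factorial : ℕ) : ℤ) * a) := by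
        push_cast
        ring
      rw [this, Fraw_lift, ih hnm]
    · have : n = m + 1 := by omega
      subst this
      rw [Nat.div_self (Nat.factorial_pos _)]
      norm_num

/-! ### Circle homeomorphisms from the lifts -/

noncomputable def Flift (n : ℕ) (a : ℤ) : CircleDeg1Lift :=
  ⟨⟨Fraw n a, (Fraw_strictMono n a).monotone⟩, Fraw_add_one n a⟩

@[simp] lemma Flift_apply (n : ℕ) (a : ℤ) (x : ℝ) : Flift n a x = Fraw n a x := rfl

lemma Fraw_add_int (n : ℕ) (a : ℤ) (x : ℝ) (k : ℤ) : Fraw n a (x + k) = Fraw n a x + k :=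
  (Flift n a).map_add_int x k

lemma coe_add_int_eq (x : ℝ) (k : ℤ) : ((x + k : ℝ) : S¹) = (x : S¹) := by
  rw [QuotientAddGroup.eq]
  exact ⟨-k, by simp⟩

noncomputable def cmap (n : ℕ) (a : ℤ) : S¹ → S¹ := fun x =>
  Quotient.liftOn' x (fun y => ((Fraw n a y : ℝ) : S¹)) (by
    intro y z h
    have h' : -y + z ∈ AddSubgroup.zmultiples (1:ℝ) := QuotientAddGroup.leftRel_apply.mp h
    obtain ⟨k, hk⟩ := h'
    simp only [zsmul_eq_mul, mul_one] at hk
    have hz : z = y + k := by linarith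
    simp only [hz, Fraw_add_int, coe_add_int_eq])

lemma cmap_coe (n : ℕ) (a : ℤ) (y : ℝ) : cmap n a (y : S¹) = ((Fraw n a y : ℝ) : S¹) := rfl

lemma cmap_continuous (n : ℕ) (a : ℤ) : Continuous (cmap n a) :=
  Continuous.quotient_liftOn' (continuous_quotient_mk'.comp (Fraw_continuous n a)) _

noncomputable def chom (n : ℕ) (a : ℤ) : S¹ ≃ₜ S¹ where
  toFun := cmap n a
  invFun := cmap n (-a)
  left_inv := by
    intro x
    induction x using QuotientAddGroup.induction_on with
    | H y => rw [cmap_coe, cmap_coe, Fraw_comp, neg_add_cancel, Fraw_zero]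
  right_inv := by
    intro x
    induction x using QuotientAddGroup.induction_on with
    | H y => rw [cmap_coe, cmap_coe, Fraw_comp, add_neg_cancel, Fraw_zero]
  continuous_toFun := cmap_continuous n a
  continuous_invFun := cmap_continuous n (-a)

lemma chom_coe (n : ℕ) (a : ℤ) (y : ℝ) : chom n a (y : S¹) = ((Fraw n a y : ℝ) : S¹) := rfl

lemma isLift_chom (n : ℕ) (a : ℤ) : IsLift (chom n a) (Flift n a) := fun _ => rfl

lemma chom_mul (n : ℕ) (a b : ℤ) : chom n a * chom n b = chom n (a + b) := by
  apply Homeomorph.ext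
  intro x
  induction x using QuotientAddGroup.induction_on with
  | H y =>
    show chom n a (chom n b (y : S¹)) = chom n (a+b) (y : S¹)
    rw [chom_coe, chom_coe, chom_coe, Fraw_comp]

lemma chom_period (n : ℕ) (a k : ℤ) : chom n (a + (n.factorial : ℤ) * k) = chom n a := by
  apply Homeomorph.ext
  intro x
  induction x using QuotientAddGroup.induction_on with
  | H y => rw [chom_coe, chom_coe, Fraw_period, coe_add_int_eq]

lemma chom_lift_le (n m : ℕ) (h : n ≤ m) (a : ℤ) :
    chom m (((m.factorial / n.factorial : ℕ) : ℤ) * a) = chom n a := by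
  apply Homeomorph.ext
  intro x
  induction x using QuotientAddGroup.induction_on with
  | H y => rw [chom_coe, chom_coe, Fraw_lift_le n m h]

lemma chom_zero (n : ℕ) : chom n 0 = 1 := by
  apply Homeomorph.ext
  intro x
  induction x using QuotientAddGroup.induction_on with
  | H y =>
    show chom n 0 (y : S¹) = (y : S¹)
    rw [chom_coe, Fraw_zero]

/-! ### Translation numbers -/

lemma Flift_mul (n : ℕ) (a b : ℤ) : Flift n a * Flift n b = Flift n (a + b) :=
  CircleDeg1Lift.ext fun x => Fraw_comp n a b x

lemma Flift_pow (n : ℕ) (a : ℤ) (m : ℕ) : Flift n a ^ m = Flift n ((m : ℤ) * a) := by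
  induction m with
  | zero =>
    apply CircleDeg1Lift.ext
    intro x
    show x = Fraw n ((0:ℤ) * a) x
    rw [zero_mul, Fraw_zero]
  | succ m ih =>
    rw [pow_succ, ih, Flift_mul]
    congr 1
    push_cast
    ring

lemma Flift_translate (n : ℕ) (k : ℤ) :
    Flift n ((n.factorial : ℤ) * k)
      = (CircleDeg1Lift.translate (Multiplicative.ofAdd (k : ℝ)) : CircleDeg1Liftˣ) := by
  apply CircleDeg1Lift.ext
  intro x
  show Fraw n ((n.factorial : ℤ) * k) x = (k : ℝ) + x
  rw [Fraw_int_translate]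
  ring

lemma tau_Flift (n : ℕ) (a : ℤ) :
    (Flift n a).translationNumber = (a : ℝ) / (n.factorial : ℝ) := by
  have h1 : Flift n a ^ (n.factorial) = Flift n ((n.factorial : ℤ) * a) := Flift_pow n a _
  have h2 := congrArg CircleDeg1Lift.translationNumber h1
  rw [CircleDeg1Lift.translationNumber_pow, Flift_translate,
    CircleDeg1Lift.translationNumber_translate] at h2
  have hN : (n.factorial : ℝ) ≠ 0 := by
    have := n.factorial_pos
    positivity
  field_simp
  linarith [h2]


/-! ### All lifts of the same circle homeomorphism have the same rotation number mod 1 -/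

lemma lift_surjective {f : S¹ ≃ₜ S¹} {G : CircleDeg1Lift} (hG : IsLift f G) :
    Function.Surjective G := by
  intro z
  obtain ⟨w, hw⟩ := f.surjective ((z : ℝ) : S¹)
  induction w using QuotientAddGroup.induction_on with
  | H y =>
    rw [hG y] at hw
    obtain ⟨k, hk⟩ := (QuotientAddGroup.eq).mp hw
    simp only [zsmul_eq_mul, mul_one] at hk
    exact ⟨y + k, by rw [G.map_add_int]; linarith⟩

lemma lift_continuous {f : S¹ ≃ₜ S¹} {G : CircleDeg1Lift} (hG : IsLift f G) :
    Continuous G :=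
  G.monotone.continuous_of_surjective (lift_surjective hG)

lemma lift_sub_int {f : S¹ ≃ₜ S¹} {G F : CircleDeg1Lift} (hG : IsLift f G) (hF : IsLift f F)
    (x : ℝ) : ∃ k : ℤ, G x = F x + k := by
  have h : ((F x : ℝ) : S¹) = ((G x : ℝ) : S¹) := by rw [← hG x, ← hF x]
  obtain ⟨k, hk⟩ := (QuotientAddGroup.eq).mp h
  simp only [zsmul_eq_mul, mul_one] at hk
  exact ⟨k, by linarith⟩

lemma tau_lift_unique {f : S¹ ≃ₜ S¹} {G F : CircleDeg1Lift} (hG : IsLift f G)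
    (hF : IsLift f F) :
    ∃ k : ℤ, G.translationNumber = F.translationNumber + k := by
  obtain ⟨k, hk0⟩ := lift_sub_int hG hF 0
  have hcont : Continuous (fun x => G x - F x) :=
    ((lift_continuous hG).sub (lift_continuous hF))
  have hall : ∀ x, G x = F x + k := by
    intro x
    obtain ⟨k', hk'⟩ := lift_sub_int hG hF x
    have hmain : k' = k := by
      by_contra hne
      have hiv := intermediate_value_uIcc (a := (0:ℝ)) (b := x)
        (f := fun t => G t - F t) hcont.continuousOn
      have e0 : G 0 - F 0 = (k:ℝ) := by linarith
      have ex : G x - F x = (k':ℝ) := by linarith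
      have hminmax : (min k k' : ℤ) + 1 ≤ (max k k' : ℤ) := by omega
      have hc : ((min k k' : ℤ) : ℝ) + 1/2 ∈ Set.uIcc ((fun t => G t - F t) 0)
          ((fun t => G t - F t) x) := by
        simp only [e0, ex]
        rcases lt_or_gt_of_ne hne with h | h
        · have hcast : ((k':ℤ):ℝ) + 1 ≤ ((k:ℤ):ℝ) := by
            exact_mod_cast (by omega : k' + 1 ≤ k)
          have hmin : min k k' = k' := by omega
          rw [hmin]
          exact Set.mem_uIcc.mpr (Or.inr ⟨by linarith, by linarith⟩)
        · have hcast : ((k:ℤ):ℝ) + 1 ≤ ((k':ℤ):ℝ) := by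
            exact_mod_cast (by omega : k + 1 ≤ k')
          have hmin : min k k' = k := by omega
          rw [hmin]
          exact Set.mem_uIcc.mpr (Or.inl ⟨by linarith, by linarith⟩)
      obtain ⟨t, _, ht⟩ := hiv hc
      obtain ⟨k'', hk''⟩ := lift_sub_int hG hF t
      have : ((2 * k'' : ℤ) : ℝ) = ((2 * min k k' + 1 : ℤ) : ℝ) := by
        push_cast
        simp only at ht
        push_cast at ht
        linarith
      have h4 : (2 * k'' : ℤ) = 2 * min k k' + 1 := by exact_mod_cast this
      omega
    rw [hmain] at hk'
    exact hk'
  have hGe : G = (CircleDeg1Lift.translate (Multiplicative.ofAdd (k:ℝ)) : CircleDeg1Liftˣ) * F := by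
    apply CircleDeg1Lift.ext
    intro x
    show G x = (k:ℝ) + F x
    rw [hall x]
    ring
  have hcomm : Commute
      ((CircleDeg1Lift.translate (Multiplicative.ofAdd (k:ℝ)) : CircleDeg1Liftˣ) : CircleDeg1Lift)
      F := by
    apply CircleDeg1Lift.ext
    intro x
    show (k:ℝ) + F x = F ((k:ℝ) + x)
    rw [F.map_int_add]
  rw [hGe, CircleDeg1Lift.translationNumber_mul_of_commute hcomm,
    CircleDeg1Lift.translationNumber_translate]
  exact ⟨k, by ring⟩

lemma rot_eq {f : S¹ ≃ₜ S¹} {F : CircleDeg1Lift} (hF : IsLift f F) :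
    rot f = ((F.translationNumber : ℝ) : S¹) := by
  have hOP : OrientationPreserving f := ⟨F, hF⟩
  rw [rot, dif_pos hOP]
  obtain ⟨k, hk⟩ := tau_lift_unique hOP.choose_spec hF
  rw [hk, coe_add_int_eq]

/-! ### The maps indexed by rationals -/

noncomputable def cIdx (q : ℚ) (n : ℕ) : ℤ := q.num * ((n.factorial / q.den : ℕ) : ℤ)

lemma cIdx_rat (q : ℚ) (n : ℕ) (h : q.den ≤ n) : (cIdx q n : ℚ) = q * n.factorial := by
  have hdvd : q.den ∣ n.factorial := Nat.dvd_factorial q.pos h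
  have hden : ((q.den : ℚ)) ≠ 0 := by exact_mod_cast q.den_nz
  rw [cIdx]
  push_cast [Nat.cast_div hdvd hden]
  conv_rhs => rw [← Rat.num_div_den q]
  field_simp
  rw [mul_assoc, ← Int.cast_natCast (R := ℚ) q.den, ← Int.cast_mul,
    Int.ediv_mul_cancel (by exact_mod_cast hdvd)]
  push_cast
  ring

noncomputable def gq (q : ℚ) : S¹ ≃ₜ S¹ := chom q.den (cIdx q q.den)

lemma gq_eq_chom (q : ℚ) (n : ℕ) (h : q.den ≤ n) : gq q = chom n (cIdx q n) := by
  rw [gq, ← chom_lift_le q.den n h (cIdx q q.den)]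
  congr 1
  have hnat : (n.factorial / q.den.factorial) * (q.den.factorial / q.den) = n.factorial / q.den := by
    rw [Nat.div_mul_div_comm (Nat.factorial_dvd_factorial h) (Nat.dvd_factorial q.pos le_rfl),
      mul_comm n.factorial q.den.factorial,
      Nat.mul_div_mul_left _ _ (Nat.factorial_pos q.den)]
  have hz : (((n.factorial / q.den.factorial : ℕ) : ℤ)) * ((q.den.factorial / q.den : ℕ) : ℤ)
      = ((n.factorial / q.den : ℕ) : ℤ) := by exact_mod_cast hnat
  rw [cIdx, cIdx, ← hz]
  ring

lemma gq_wd (q r : ℚ) (h : ((q:ℝ):S¹) = ((r:ℝ):S¹)) : gq q = gq r := by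
  obtain ⟨k, hk⟩ := (QuotientAddGroup.eq).mp h
  simp only [zsmul_eq_mul, mul_one] at hk
  have hk' : (r : ℚ) = q + k := by
    have : ((r : ℚ) : ℝ) = ((q + k : ℚ) : ℝ) := by push_cast; linarith
    exact_mod_cast this
  set n := q.den + r.den with hn
  have hq : q.den ≤ n := by omega
  have hr : r.den ≤ n := by omega
  rw [gq_eq_chom q n hq, gq_eq_chom r n hr]
  have hc : cIdx r n = cIdx q n + (n.factorial : ℤ) * k := by
    have : ((cIdx r n : ℤ) : ℚ) = ((cIdx q n + (n.factorial : ℤ) * k : ℤ) : ℚ) := by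
      push_cast
      rw [cIdx_rat q n hq, cIdx_rat r n hr, hk']
      ring
    exact_mod_cast this
  rw [hc, chom_period]

lemma gq_mul (q r : ℚ) : gq (q + r) = gq q * gq r := by
  set n := q.den + r.den + (q+r).den with hn
  have h1 : q.den ≤ n := by omega
  have h2 : r.den ≤ n := by omega
  have h3 : (q+r).den ≤ n := by omega
  rw [gq_eq_chom q n h1, gq_eq_chom r n h2, gq_eq_chom (q+r) n h3, chom_mul]
  congr 1
  have : ((cIdx (q+r) n : ℤ) : ℚ) = ((cIdx q n + cIdx r n : ℤ) : ℚ) := by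
    push_cast
    rw [cIdx_rat q n h1, cIdx_rat r n h2, cIdx_rat (q+r) n h3]
    ring
  exact_mod_cast this

lemma rot_gq (q : ℚ) : rot (gq q) = ((q : ℝ) : S¹) := by
  rw [gq, rot_eq (isLift_chom q.den (cIdx q q.den)), tau_Flift]
  congr 1
  have hd : ((q.den.factorial : ℝ)) ≠ 0 := by
    exact_mod_cast (Nat.factorial_pos q.den).ne'
  have : ((cIdx q q.den : ℤ) : ℝ) = (q : ℝ) * (q.den.factorial : ℝ) := by
    exact_mod_cast congrArg (fun t : ℚ => (t : ℝ)) (cIdx_rat q q.den le_rfl)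
  rw [this]
  field_simp

/-! ### Membership in Thompson's group T -/

lemma isDyadic_iff (x : ℝ) : _root_.IsDyadic x ↔ TGrp.IsDyadic x := Iff.rfl

lemma inThompsonT_chom (n : ℕ) (a : ℤ) : InThompsonT (chom n a) := by
  refine ⟨Flift n a, isLift_chom n a, ?_, ?_⟩
  · intro x hx
    exact (isDyadic_iff _).mpr (Fraw_dyadic n a ((isDyadic_iff x).mp hx))
  · refine ⟨(Finset.range n.factorial).image (fun j : ℕ => betaZ n (j : ℤ)), ?_, ?_⟩
    · intro b hb
      obtain ⟨j, _, rfl⟩ := Finset.mem_image.mp hb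
      exact (isDyadic_iff _).mpr (betaZ_dyadic n j)
    · intro x hx
      have hne : ∀ i : ℤ, x ≠ betaZ n i := by
        intro i hxi
        have hN := Npos n
        have hr0 : 0 ≤ i % (n.factorial:ℤ) := Int.emod_nonneg i (by omega)
        have hrN : i % (n.factorial:ℤ) < (n.factorial:ℤ) := Int.emod_lt_of_pos i hN
        have hd : betaZ n i
            = betaZ n (i % (n.factorial:ℤ)) + ((i / (n.factorial:ℤ) : ℤ) : ℝ) := by
          conv_lhs => rw [show i = i % (n.factorial:ℤ) + (n.factorial:ℤ) * (i / (n.factorial:ℤ))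
            from (Int.emod_add_mul_ediv i _).symm]
          rw [betaZ_shift]
        refine hx (betaZ n (i % (n.factorial:ℤ))) ?_ (i / (n.factorial:ℤ)) (by rw [hxi, hd])
        apply Finset.mem_image.mpr
        refine ⟨(i % (n.factorial:ℤ)).toNat, Finset.mem_range.mpr (by omega), ?_⟩
        rw [Int.toNat_of_nonneg hr0]
      have hs := idx_spec n x
      have hlt1 : betaZ n (idx n x) < x := lt_of_le_of_ne hs.1 (fun h => hne _ h.symm)
      obtain ⟨e1, he1⟩ := lenZ_isPow2 n (idx n x + a)
      obtain ⟨e2, he2⟩ := lenZ_isPow2 n (idx n x)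
      refine ⟨min (x - betaZ n (idx n x)) (betaZ n (idx n x + 1) - x),
        lt_min (by linarith) (by linarith [hs.2]), e1 - e2,
        betaZ n (idx n x + a) - 2 ^ (e1 - e2) * betaZ n (idx n x), ?_⟩
      intro y hy
      have hy1 : betaZ n (idx n x) < y := by
        have := abs_lt.mp hy
        have h2 := min_le_left (x - betaZ n (idx n x)) (betaZ n (idx n x + 1) - x)
        linarith [this.1]
      have hy2 : y < betaZ n (idx n x + 1) := by
        have := abs_lt.mp hy
        have h2 := min_le_right (x - betaZ n (idx n x)) (betaZ n (idx n x + 1) - x)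
        linarith [this.2]
      have hidy : idx n y = idx n x := idx_unique n y (idx n x) (le_of_lt hy1) hy2
      show Fraw n a y = _
      rw [Fraw, hidy, he1, he2, ← zpow_sub₀ (by norm_num : (2:ℝ) ≠ 0)]
      ring

/-! ### Assembling the homomorphism -/

lemma mem_QmodZ_iff (s : S¹) : s ∈ QmodZ ↔ ∃ q : ℚ, s = ((q:ℝ):S¹) := Iff.rfl

noncomputable def phi0 : ↥QmodZ → (S¹ ≃ₜ S¹) := fun x =>
  gq (Classical.choose ((mem_QmodZ_iff _).mp x.2))

lemma phi0_eq (x : ↥QmodZ) (q : ℚ) (hq : (x : S¹) = ((q:ℝ):S¹)) : phi0 x = gq q := by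
  apply gq_wd
  rw [← Classical.choose_spec ((mem_QmodZ_iff _).mp x.2), hq]

noncomputable def phi : Multiplicative ↥QmodZ →* (S¹ ≃ₜ S¹) :=
  MonoidHom.mk' (fun x => phi0 (Multiplicative.toAdd x)) (by
    intro x y
    obtain ⟨qx, hqx⟩ := (mem_QmodZ_iff _).mp (Multiplicative.toAdd x).2
    obtain ⟨qy, hqy⟩ := (mem_QmodZ_iff _).mp (Multiplicative.toAdd y).2
    have hxy : ((Multiplicative.toAdd (x * y) : ↥QmodZ) : S¹) = (((qx + qy : ℚ) : ℝ) : S¹) := by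
      have : (Multiplicative.toAdd (x * y) : ↥QmodZ)
          = Multiplicative.toAdd x + Multiplicative.toAdd y := rfl
      rw [this]
      push_cast
      rw [hqx, hqy]
      rfl
    show phi0 (Multiplicative.toAdd (x * y))
        = phi0 (Multiplicative.toAdd x) * phi0 (Multiplicative.toAdd y)
    rw [phi0_eq _ _ hxy, phi0_eq _ _ hqx, phi0_eq _ _ hqy, gq_mul])

lemma rot_phi (x : Multiplicative ↥QmodZ) :
    rot (phi x) = ((Multiplicative.toAdd x : ↥QmodZ) : S¹) := by
  obtain ⟨q, hq⟩ := (mem_QmodZ_iff _).mp (Multiplicative.toAdd x).2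
  show rot (phi0 (Multiplicative.toAdd x)) = _
  rw [phi0_eq _ _ hq, rot_gq, hq]

lemma inT_phi (x : Multiplicative ↥QmodZ) : InThompsonT (phi x) := by
  obtain ⟨q, hq⟩ := (mem_QmodZ_iff _).mp (Multiplicative.toAdd x).2
  show InThompsonT (phi0 (Multiplicative.toAdd x))
  rw [phi0_eq _ _ hq, gq]
  exact inThompsonT_chom _ _

end TGrp

/-- There is an injective homomorphism `φ : ℚ/ℤ → T` into Thompson's group `T` with
`rot (φ x) = x` for all `x`. -/
theorem stmt17 :
    ∃ φ : Multiplicative ↥QmodZ →* (S¹ ≃ₜ S¹),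
      Function.Injective φ ∧ ∀ x : Multiplicative ↥QmodZ,
        InThompsonT (φ x) ∧ rot (φ x) = ((Multiplicative.toAdd x : ↥QmodZ) : S¹) := by
  refine ⟨TGrp.phi, ?_, fun x => ⟨TGrp.inT_phi x, TGrp.rot_phi x⟩⟩
  intro x y hxy
  have h1 : rot (TGrp.phi x) = rot (TGrp.phi y) := by rw [hxy]
  rw [TGrp.rot_phi x, TGrp.rot_phi y] at h1
  have h2 : (Multiplicative.toAdd x : ↥QmodZ) = (Multiplicative.toAdd y : ↥QmodZ) :=
    Subtype.ext h1
  exact Multiplicative.toAdd.injective h2
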